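/- Let a = 2 and suppose c = 2^k − ∑_{i=0}^{k−1} r_i·2^i, where each r_i ∈ {0,1}. If s_0 ≥ 2·(∑_{i=0}^{k−1} r_i − 1), then s_{n+k} = (s_0 − 2·(∑_{i=0}^{k−1} r_i − 1))·s_0 + (d + ∑_{i=0}^{k−1} r_i − 1)·s_1 + ∑_{i=0}^{k−1} r_i·s_{n+i}, where all the coefficients are nonnegative and their sum is 1 + c·2^n. -/
import Mathlib


/-- case `a = 2`: suppose `c = 2^k − ∑_{i<k} r_i·2^i` with each
`r_i ∈ {0,1}`. If `s_0 ≥ 2·(∑_{i<k} r_i − 1)`, then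
`s_{n+k} = (s_0 − 2·(∑ r_i − 1))·s_0 + (d + ∑ r_i − 1)·s_1 + ∑_{i<k} r_i·s_{n+i}`,
where all coefficients are nonnegative and their sum is `1 + c·2^n`. -/
theorem stmt_7 (c d n : ℕ) (hc : 0 < c) (hd : 0 < d) (hdca : d < 2 * c)
    (hdodd : Odd d) (hdc : Nat.Coprime d c) (hn : 0 < n)
    (s : ℕ → ℕ) (hs : ∀ j, s j = c * 2 ^ (n + j) - d)
    (k : ℕ) (r : ℕ → ℕ) (hr : ∀ i < k, r i ≤ 1)
    (hck : (c : ℤ) = 2 ^ k - ∑ i ∈ Finset.range k, (r i : ℤ) * 2 ^ i)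
    (hs0 : (s 0 : ℤ) ≥ 2 * ((∑ i ∈ Finset.range k, (r i : ℤ)) - 1)) :
    (s (n + k) : ℤ) =
        ((s 0 : ℤ) - 2 * ((∑ i ∈ Finset.range k, (r i : ℤ)) - 1)) * (s 0 : ℤ) +
          ((d : ℤ) + (∑ i ∈ Finset.range k, (r i : ℤ)) - 1) * (s 1 : ℤ) +
          ∑ i ∈ Finset.range k, (r i : ℤ) * (s (n + i) : ℤ) ∧
      0 ≤ (s 0 : ℤ) - 2 * ((∑ i ∈ Finset.range k, (r i : ℤ)) - 1) ∧
      0 ≤ (d : ℤ) + (∑ i ∈ Finset.range k, (r i : ℤ)) - 1 ∧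
      ((s 0 : ℤ) - 2 * ((∑ i ∈ Finset.range k, (r i : ℤ)) - 1)) +
          ((d : ℤ) + (∑ i ∈ Finset.range k, (r i : ℤ)) - 1) +
          (∑ i ∈ Finset.range k, (r i : ℤ)) = 1 + c * 2 ^ n := by

  have hle : ∀ j, d ≤ c * 2 ^ (n + j) := by
    intro j
    calc d ≤ 2 * c := hdca.le
    _ ≤ c * 2 ^ (n + j) := by
        rw [mul_comm]
        exact Nat.mul_le_mul_left c (le_trans (by norm_num)
          (Nat.pow_le_pow_right (by norm_num) (Nat.le_add_right 1 j |>.trans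
            (Nat.add_le_add_right hn j))))
  have h2 : ∀ j, (s j : ℤ) = (c : ℤ) * 2 ^ (n + j) - d := by
    intro j
    rw [hs j, Nat.cast_sub (hle j)]
    push_cast
    ring
  have hsum : ∑ i ∈ Finset.range k, (r i : ℤ) * (s (n + i) : ℤ)
      = (c : ℤ) * 2 ^ (2 * n) * (∑ i ∈ Finset.range k, (r i : ℤ) * 2 ^ i)
        - d * ∑ i ∈ Finset.range k, (r i : ℤ) := by
    rw [Finset.mul_sum, Finset.mul_sum, ← Finset.sum_sub_distrib]
    apply Finset.sum_congr rfl
    intro i _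
    rw [h2 (n + i)]
    ring
  have hRnn : 0 ≤ ∑ i ∈ Finset.range k, (r i : ℤ) :=
    Finset.sum_nonneg fun i _ => by positivity
  have hd1 : (1 : ℤ) ≤ d := by exact_mod_cast hd
  refine ⟨?_, by linarith, by linarith, ?_⟩
  · rw [hsum, h2 (n + k), h2 0, h2 1]
    linear_combination (-(c : ℤ) * 2 ^ (2 * n)) * hck
  · rw [h2 0]
    ring
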